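/- Let ε₀ > 0, ε ≥ 0, and let R be the ε₀-LDP Laplace mechanism on [0,1], R(x) = x + Lap(1/ε₀), with output densities μ_x(y) = (ε₀/2)·e^{−ε₀|y−x|} on ℝ; its blanket distribution has density ω(y) = (ε₀/2)·e^{−ε₀|y−1/2|}. Fix x, x' ∈ [0,1], let W have density ω, and let L = (μ_x(W) − e^ε·μ_{x'}(W))/ω(W). Then: (1) e^{−ε₀/2}·(1 − e^{ε+ε₀}) ≤ L ≤ e^{ε₀/2}·(1 − e^{ε−ε₀}) almost surely; (2) E[L²] ≤ ((e^{2ε} + 1)/3)·(2·e^{ε₀/2} + e^{−ε₀}) − 2·e^ε·(2·e^{−ε₀/2} − e^{−ε₀}). -/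

import Mathlib

open MeasureTheory Set
open scoped ENNReal


private lemma expIoi_intOn {s : ℝ} (hs : 0 < s) (k b : ℝ) :
    IntegrableOn (fun y : ℝ => Real.exp (k - s * y)) (Set.Ioi b) := by
  have h := (exp_neg_integrableOn_Ioi b hs).const_mul (Real.exp k)
  simpa [← Real.exp_add, sub_eq_add_neg, neg_mul, IntegrableOn] using h

private lemma expIoi_val {s : ℝ} (hs : 0 < s) (k b : ℝ) :
    ∫ y in Set.Ioi b, Real.exp (k - s * y) = Real.exp (k - s * b) / s := by
  have h1 : ∀ y : ℝ, Real.exp (k - s * y) = Real.exp k * Real.exp (-(s * y)) := by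
    intro y; rw [← Real.exp_add]; ring_nf
  simp only [h1]
  rw [MeasureTheory.integral_const_mul]
  have h2 := MeasureTheory.integral_comp_mul_left_Ioi (fun u => Real.exp (-u)) b hs
  simp only [smul_eq_mul] at h2
  rw [h2, integral_exp_neg_Ioi]; ring

private lemma expIic_intOn {s : ℝ} (hs : 0 < s) (k b : ℝ) :
    IntegrableOn (fun y : ℝ => Real.exp (k + s * y)) (Set.Iic b) := by
  have A : MeasurableEmbedding fun x : ℝ => -x :=
    (Homeomorph.neg ℝ).isClosedEmbedding.measurableEmbedding
  have h : IntegrableOn (fun y : ℝ => Real.exp (k - s * y)) (Set.Ici (-b)) :=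
    (expIoi_intOn hs k (-b - 1)).mono_set (Set.Ici_subset_Ioi.mpr (by linarith))
  have h2 := (A.integrableOn_map_iff (f := fun y : ℝ => Real.exp (k - s * y))
      (μ := (volume : Measure ℝ)) (s := Set.Ici (-b)))
  rw [Measure.map_neg_eq_self (volume : Measure ℝ)] at h2
  have h3 := h2.mp h
  have h4 : (fun x : ℝ => -x) ⁻¹' (Set.Ici (-b)) = Set.Iic b := by ext z; simp
  rw [h4] at h3
  have h5 : ((fun y : ℝ => Real.exp (k - s * y)) ∘ fun x : ℝ => -x)
      = fun y : ℝ => Real.exp (k + s * y) := by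
    funext y; simp [Function.comp, sub_eq_add_neg, mul_neg]
  rwa [h5] at h3

private lemma expIic_val {s : ℝ} (hs : 0 < s) (k b : ℝ) :
    ∫ y in Set.Iic b, Real.exp (k + s * y) = Real.exp (k + s * b) / s := by
  have h := integral_comp_neg_Iic b (fun y : ℝ => Real.exp (k - s * y))
  rw [expIoi_val hs] at h
  simp only [mul_neg, sub_neg_eq_add] at h
  rw [h]

private lemma expIoc_val {s : ℝ} (hs : 0 < s) (k a b : ℝ) (hab : a ≤ b) :
    ∫ y in Set.Ioc a b, Real.exp (k - s * y)
      = (Real.exp (k - s * a) - Real.exp (k - s * b)) / s := by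
  rw [← intervalIntegral.integral_of_le hab]
  have hd : ∀ y ∈ Set.uIcc a b, HasDerivAt (fun z => -(Real.exp (k - s * z) / s))
      (Real.exp (k - s * y)) y := by
    intro y _
    have h1 : HasDerivAt (fun z : ℝ => k - s * z) (-s) y := by
      simpa using ((hasDerivAt_id y).const_mul s).const_sub k
    have h2 := h1.exp
    have h3 := (h2.div_const s).neg
    rwa [mul_neg, neg_div, neg_neg, mul_div_assoc, div_self hs.ne', mul_one] at h3
  rw [intervalIntegral.integral_eq_sub_of_hasDerivAt hd ?_]
  · ring
  · apply Continuous.intervalIntegrable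
    exact Real.continuous_exp.comp (by continuity)

private lemma lap_intOn_Iic {s : ℝ} (hs : 0 < s) (c t b : ℝ) (hbt : b ≤ t) :
    IntegrableOn (fun y : ℝ => Real.exp (c - s * |y - t|)) (Set.Iic b) := by
  apply ((expIic_intOn hs (c - s * t) b).congr_fun ?_ measurableSet_Iic)
  intro y hy
  simp only [Set.mem_Iic] at hy
  show Real.exp _ = Real.exp _
  rw [abs_of_nonpos (by linarith : y - t ≤ 0)]
  ring_nf

private lemma lap_intOn_Ioi {s : ℝ} (hs : 0 < s) (c t b : ℝ) (hbt : t ≤ b) :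
    IntegrableOn (fun y : ℝ => Real.exp (c - s * |y - t|)) (Set.Ioi b) := by
  apply ((expIoi_intOn hs (c + s * t) b).congr_fun ?_ measurableSet_Ioi)
  intro y hy
  simp only [Set.mem_Ioi] at hy
  show Real.exp _ = Real.exp _
  rw [abs_of_nonneg (by linarith : 0 ≤ y - t)]
  ring_nf

private lemma lap_integrable {s : ℝ} (hs : 0 < s) (c t : ℝ) :
    Integrable (fun y : ℝ => Real.exp (c - s * |y - t|)) := by
  rw [← integrableOn_univ, ← Set.Iic_union_Ioi (a := t)]
  exact (lap_intOn_Iic hs c t t le_rfl).union (lap_intOn_Ioi hs c t t le_rfl)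

private lemma lap_val {s : ℝ} (hs : 0 < s) (c t : ℝ) :
    ∫ y : ℝ, Real.exp (c - s * |y - t|) = 2 * Real.exp c / s := by
  rw [← intervalIntegral.integral_Iic_add_Ioi (lap_intOn_Iic hs c t t le_rfl) (lap_intOn_Ioi hs c t t le_rfl)]
  have h1 : ∫ y in Set.Iic t, Real.exp (c - s * |y - t|)
      = ∫ y in Set.Iic t, Real.exp ((c - s * t) + s * y) := by
    apply setIntegral_congr_fun measurableSet_Iic
    intro y hy; simp only [Set.mem_Iic] at hy
    show Real.exp _ = Real.exp _
    rw [abs_of_nonpos (by linarith : y - t ≤ 0)]; ring_nf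
  have h2 : ∫ y in Set.Ioi t, Real.exp (c - s * |y - t|)
      = ∫ y in Set.Ioi t, Real.exp ((c + s * t) - s * y) := by
    apply setIntegral_congr_fun measurableSet_Ioi
    intro y hy; simp only [Set.mem_Ioi] at hy
    show Real.exp _ = Real.exp _
    rw [abs_of_nonneg (by linarith : 0 ≤ y - t)]; ring_nf
  rw [h1, h2, expIic_val hs, expIoi_val hs]
  rw [show c - s * t + s * t = c by ring, show c + s * t - s * t = c by ring]
  ring

private lemma cont_G (s h t r : ℝ) :
    Continuous fun y : ℝ => Real.exp (s * |y - h| - s * |y - t| - s * |y - r|) := by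
  apply Real.continuous_exp.comp
  continuity

private lemma G_le {s : ℝ} (hs : 0 < s) {r : ℝ} (hr0 : 0 ≤ r) (hr1 : r ≤ 1) (h t y : ℝ)
    (hh : |r - h| ≤ 1/2) :
    Real.exp (s * |y - h| - s * |y - t| - s * |y - r|) ≤ Real.exp (s/2 - s * |y - t|) := by
  apply Real.exp_le_exp.mpr
  have h1 : |y - h| - |y - r| ≤ |r - h| := by
    have := abs_sub_abs_le_abs_sub (y - h) (y - r)
    have e : (y - h) - (y - r) = r - h := by ring
    rw [e] at this; linarith
  nlinarith [abs_nonneg (y - r), hs.le]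

private lemma G_integrable {s : ℝ} (hs : 0 < s) {r : ℝ} (hr0 : 0 ≤ r) (hr1 : r ≤ 1) (t : ℝ) :
    Integrable (fun y : ℝ => Real.exp (s * |y - 1/2| - s * |y - t| - s * |y - r|)) := by
  apply Integrable.mono' (lap_integrable hs (s/2) t)
  · exact (cont_G s (1/2) t r).aestronglyMeasurable
  · filter_upwards with y
    rw [Real.norm_eq_abs, Real.abs_exp]
    exact G_le hs hr0 hr1 (1/2) t y (abs_le.mpr ⟨by linarith, by linarith⟩)

set_option maxHeartbeats 1000000 in
private lemma selfI_half {s : ℝ} (hs : 0 < s) {t : ℝ} (ht0 : 0 ≤ t) (ht : t ≤ 1/2) :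
    ∫ y : ℝ, Real.exp (s * |y - 1/2| - s * |y - t| - s * |y - t|)
      ≤ (4 * Real.exp (s/2) + 2 * Real.exp (-s)) / (3 * s) := by
  have ht1 : t ≤ 1 := by linarith
  have hint := G_integrable hs ht0 ht1 t
  have hsplit1 := intervalIntegral.integral_Iic_add_Ioi (b := t)
    hint.integrableOn hint.integrableOn
  have hsplit2 : (∫ y in Set.Ioi t, Real.exp (s * |y - 1/2| - s * |y - t| - s * |y - t|))
      = (∫ y in Set.Ioc t (1/2), Real.exp (s * |y - 1/2| - s * |y - t| - s * |y - t|))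
        + ∫ y in Set.Ioi (1/2 : ℝ), Real.exp (s * |y - 1/2| - s * |y - t| - s * |y - t|) := by
    rw [← Set.Ioc_union_Ioi_eq_Ioi ht,
      setIntegral_union (Set.Ioc_disjoint_Ioi le_rfl) measurableSet_Ioi
        hint.integrableOn hint.integrableOn]
  have hv1 : (∫ y in Set.Iic t, Real.exp (s * |y - 1/2| - s * |y - t| - s * |y - t|))
      = Real.exp (s/2 - s * t) / s := by
    have hc : ∀ y ∈ Set.Iic t, Real.exp (s * |y - 1/2| - s * |y - t| - s * |y - t|)
        = Real.exp ((s/2 - 2*s*t) + s * y) := by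
      intro y hy; simp only [Set.mem_Iic] at hy
      rw [abs_of_nonpos (by linarith : y - 1/2 ≤ 0), abs_of_nonpos (by linarith : y - t ≤ 0)]
      ring_nf
    rw [setIntegral_congr_fun measurableSet_Iic hc, expIic_val hs,
      show s/2 - 2*s*t + s * t = s/2 - s*t by ring]
  have hv2 : (∫ y in Set.Ioc t (1/2), Real.exp (s * |y - 1/2| - s * |y - t| - s * |y - t|))
      = (Real.exp (s/2 - s*t) - Real.exp (2*s*t - s)) / (3*s) := by
    have hc : ∀ y ∈ Set.Ioc t (1/2), Real.exp (s * |y - 1/2| - s * |y - t| - s * |y - t|)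
        = Real.exp ((s/2 + 2*s*t) - (3*s) * y) := by
      intro y hy; obtain ⟨hy1, hy2⟩ := hy
      rw [abs_of_nonpos (by linarith : y - 1/2 ≤ 0), abs_of_nonneg (by linarith : 0 ≤ y - t)]
      ring_nf
    rw [setIntegral_congr_fun measurableSet_Ioc hc, expIoc_val (by linarith : 0 < 3*s) _ _ _ ht,
      show s/2 + 2*s*t - 3*s*t = s/2 - s*t by ring,
      show s/2 + 2*s*t - 3*s*(1/2) = 2*s*t - s by ring]
  have hv3 : (∫ y in Set.Ioi (1/2:ℝ), Real.exp (s * |y - 1/2| - s * |y - t| - s * |y - t|))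
      = Real.exp (2*s*t - s) / s := by
    have hc : ∀ y ∈ Set.Ioi (1/2:ℝ), Real.exp (s * |y - 1/2| - s * |y - t| - s * |y - t|)
        = Real.exp ((2*s*t - s/2) - s * y) := by
      intro y hy; simp only [Set.mem_Ioi] at hy
      rw [abs_of_nonneg (by linarith : 0 ≤ y - 1/2), abs_of_nonneg (by linarith : 0 ≤ y - t)]
      ring_nf
    rw [setIntegral_congr_fun measurableSet_Ioi hc, expIoi_val hs,
      show 2*s*t - s/2 - s * (1/2) = 2*s*t - s by ring]
  rw [← hsplit1, hsplit2, hv1, hv2, hv3]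
  -- now the algebraic inequality
  set E1 := Real.exp (s/2 - s*t) with hE1def
  set E2 := Real.exp (2*s*t - s) with hE2def
  set B := Real.exp (s/2) with hBdef
  set C := Real.exp (-s) with hCdef
  have hE1pos : 0 < E1 := Real.exp_pos _
  have hE2pos : 0 < E2 := Real.exp_pos _
  have hBpos : 0 < B := Real.exp_pos _
  have hCpos : 0 < C := Real.exp_pos _
  have hE1ge : 1 ≤ E1 := Real.one_le_exp (by nlinarith)
  have hB1 : 1 ≤ B := Real.one_le_exp (by positivity)
  have hE1le : E1 ≤ B := Real.exp_le_exp.mpr (by nlinarith)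
  have hE : E2 * E1^2 = 1 := by
    rw [hE1def, hE2def, sq, ← Real.exp_add, ← Real.exp_add, show
      2*s*t - s + (s/2 - s*t + (s/2 - s*t)) = 0 by ring, Real.exp_zero]
  have hC : C * B^2 = 1 := by
    rw [hBdef, hCdef, sq, ← Real.exp_add, ← Real.exp_add, show -s + (s/2 + s/2) = 0 by ring,
      Real.exp_zero]
  have h1B : 1 ≤ E1 * B := by nlinarith
  have key : 0 ≤ (B - E1) * (4*E1^2*B^2 - 2*(E1 + B)) := by
    apply mul_nonneg (by linarith)
    nlinarith [mul_nonneg (mul_pos hE1pos hBpos).le (sub_nonneg.mpr h1B),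
      mul_nonneg hE1pos.le (sub_nonneg.mpr hB1), mul_nonneg hBpos.le (sub_nonneg.mpr hE1ge)]
  have expand : (4*B + 2*C - 4*E1 - 2*E2) * (E1^2*B^2)
      = (B - E1) * (4*E1^2*B^2 - 2*(E1 + B)) := by
    linear_combination (2*E1^2) * hC - (2*B^2) * hE
  have hpos : (0:ℝ) < E1^2*B^2 := by positivity
  rw [← expand] at key
  have hfin : 0 ≤ 4*B + 2*C - 4*E1 - 2*E2 := by nlinarith [key, hpos]
  have hsum : E1/s + ((E1 - E2)/(3*s) + E2/s) = (4*E1 + 2*E2)/(3*s) := by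
    field_simp; ring
  rw [hsum, div_le_div_iff₀ (by positivity) (by positivity)]
  nlinarith [hfin, hs]

private lemma selfI {s : ℝ} (hs : 0 < s) {t : ℝ} (ht0 : 0 ≤ t) (ht1 : t ≤ 1) :
    ∫ y : ℝ, Real.exp (s * |y - 1/2| - s * |y - t| - s * |y - t|)
      ≤ (4 * Real.exp (s/2) + 2 * Real.exp (-s)) / (3 * s) := by
  rcases le_total t (1/2) with h | h
  · exact selfI_half hs ht0 h
  · have hMP : MeasurePreserving (fun y : ℝ => 1 - y) volume volume :=
      Measure.measurePreserving_sub_left volume 1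
    have hemb : MeasurableEmbedding (fun y : ℝ => 1 - y) :=
      (Homeomorph.subLeft (1:ℝ)).isClosedEmbedding.measurableEmbedding
    have hcomp := hMP.integral_comp hemb
      (fun y : ℝ => Real.exp (s * |y - 1/2| - s * |y - (1-t)| - s * |y - (1-t)|))
    have hpt : (fun x : ℝ => Real.exp (s * |1 - x - 1/2| - s * |1 - x - (1-t)| - s * |1 - x - (1-t)|))
        = fun x : ℝ => Real.exp (s * |x - 1/2| - s * |x - t| - s * |x - t|) := by
      funext x
      rw [show (1:ℝ) - x - 1/2 = -(x - 1/2) by ring, show (1:ℝ) - x - (1-t) = -(x - t) by ring,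
        abs_neg, abs_neg]
    rw [← hpt, hcomp]
    exact selfI_half hs (by linarith) (by linarith)

set_option maxHeartbeats 1000000 in
private lemma crossJ {s : ℝ} (hs : 0 < s) {u v : ℝ} (hu0 : 0 ≤ u) (huv : u ≤ v) (hv1 : v ≤ 1) :
    (2 * Real.exp (-(s/2)) - Real.exp (-s)) * (2/s)
      ≤ ∫ y : ℝ, Real.exp (s * |y - 1/2| - s * |y - u| - s * |y - v|) := by
  have hv0 : 0 ≤ v := le_trans hu0 huv
  have hu1 : u ≤ 1 := le_trans huv hv1
  have hint := G_integrable hs hv0 hv1 u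
  have hqpos : 0 < Real.exp (-(s/2)) := Real.exp_pos _
  have hq2 : Real.exp (-s) = Real.exp (-(s/2)) ^ 2 := by
    rw [sq, ← Real.exp_add]; ring_nf
  have hq1 : Real.exp (-(s/2)) ≤ 1 := Real.exp_le_one_iff.mpr (by linarith)
  have hq : 2 * Real.exp (-(s/2)) - Real.exp (-s) ≤ 1 := by
    nlinarith [sq_nonneg (1 - Real.exp (-(s/2)))]
  rcases le_total v (1/2) with hv | hv
  · -- both left of 1/2
    have hsplit := intervalIntegral.integral_Iic_add_Ioi (b := u)
      hint.integrableOn hint.integrableOn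
    have hIic : (∫ y in Set.Iic u, Real.exp (s * |y - 1/2| - s * |y - u| - s * |y - v|))
        = Real.exp (s/2 - s*v) / s := by
      have hc : ∀ y ∈ Set.Iic u, Real.exp (s * |y - 1/2| - s * |y - u| - s * |y - v|)
          = Real.exp ((s/2 - s*u - s*v) + s * y) := by
        intro y hy; simp only [Set.mem_Iic] at hy
        rw [abs_of_nonpos (by linarith : y - 1/2 ≤ 0), abs_of_nonpos (by linarith : y - u ≤ 0),
          abs_of_nonpos (by linarith : y - v ≤ 0)]
        ring_nf
      rw [setIntegral_congr_fun measurableSet_Iic hc, expIic_val hs,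
        show s/2 - s*u - s*v + s*u = s/2 - s*v by ring]
    have hIoi : Real.exp (s*v - s/2) / s
        ≤ ∫ y in Set.Ioi u, Real.exp (s * |y - 1/2| - s * |y - u| - s * |y - v|) := by
      have hmono : ∀ y ∈ Set.Ioi u, Real.exp ((s*u + s*v - s/2) - s * y)
          ≤ Real.exp (s * |y - 1/2| - s * |y - u| - s * |y - v|) := by
        intro y hy; simp only [Set.mem_Ioi] at hy
        apply Real.exp_le_exp.mpr
        rw [abs_of_nonneg (by linarith : 0 ≤ y - u)]
        have h1 : |y - v| - |y - 1/2| ≤ 1/2 - v := by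
          have h2 := abs_sub_abs_le_abs_sub (y - v) (y - 1/2)
          rw [show y - v - (y - 1/2) = -(v - 1/2) by ring, abs_neg,
            abs_of_nonpos (by linarith : v - 1/2 ≤ 0)] at h2
          linarith
        nlinarith [hs.le]
      have := setIntegral_mono_on (expIoi_intOn hs (s*u + s*v - s/2) u)
        hint.integrableOn measurableSet_Ioi hmono
      rw [expIoi_val hs, show s*u + s*v - s/2 - s*u = s*v - s/2 by ring] at this
      exact this
    rw [← hsplit, hIic]
    set w1 := Real.exp (s/2 - s*v)
    set w2 := Real.exp (s*v - s/2)
    have hw : w1 * w2 = 1 := by rw [← Real.exp_add, show s/2 - s*v + (s*v - s/2) = 0 by ring,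
      Real.exp_zero]
    have hw1 : 0 < w1 := Real.exp_pos _
    have hw2 : 0 < w2 := Real.exp_pos _
    have h2 : 2 ≤ w1 + w2 := by nlinarith [sq_nonneg (w1 - 1)]
    calc (2 * Real.exp (-(s/2)) - Real.exp (-s)) * (2/s) ≤ 1 * (2/s) := by
          apply mul_le_mul_of_nonneg_right hq (by positivity)
      _ = 2/s := by ring
      _ ≤ w1/s + w2/s := by
          rw [← add_div, div_le_div_iff₀ hs hs]
          nlinarith [hs]
      _ ≤ w1/s + ∫ y in Set.Ioi u, Real.exp (s * |y - 1/2| - s * |y - u| - s * |y - v|) := by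
          linarith [hIoi]
  · rcases le_total (1/2 : ℝ) u with hu | hu
    · -- both right of 1/2
      have hsplit := intervalIntegral.integral_Iic_add_Ioi (b := v)
        hint.integrableOn hint.integrableOn
      have hIoi : (∫ y in Set.Ioi v, Real.exp (s * |y - 1/2| - s * |y - u| - s * |y - v|))
          = Real.exp (s*u - s/2) / s := by
        have hc : ∀ y ∈ Set.Ioi v, Real.exp (s * |y - 1/2| - s * |y - u| - s * |y - v|)
            = Real.exp ((s*u + s*v - s/2) - s * y) := by
          intro y hy; simp only [Set.mem_Ioi] at hy
          rw [abs_of_nonneg (by linarith : 0 ≤ y - 1/2), abs_of_nonneg (by linarith : 0 ≤ y - u),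
            abs_of_nonneg (by linarith : 0 ≤ y - v)]
          ring_nf
        rw [setIntegral_congr_fun measurableSet_Ioi hc, expIoi_val hs,
          show s*u + s*v - s/2 - s*v = s*u - s/2 by ring]
      have hIic : Real.exp (s/2 - s*u) / s
          ≤ ∫ y in Set.Iic v, Real.exp (s * |y - 1/2| - s * |y - u| - s * |y - v|) := by
        have hmono : ∀ y ∈ Set.Iic v, Real.exp ((s/2 - s*u - s*v) + s * y)
            ≤ Real.exp (s * |y - 1/2| - s * |y - u| - s * |y - v|) := by
          intro y hy; simp only [Set.mem_Iic] at hy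
          apply Real.exp_le_exp.mpr
          rw [abs_of_nonpos (by linarith : y - v ≤ 0)]
          have h1 : |y - u| - |y - 1/2| ≤ u - 1/2 := by
            have h2 := abs_sub_abs_le_abs_sub (y - u) (y - 1/2)
            rw [show y - u - (y - 1/2) = -(u - 1/2) by ring, abs_neg,
              abs_of_nonneg (by linarith : 0 ≤ u - 1/2)] at h2
            linarith
          nlinarith [hs.le]
        have := setIntegral_mono_on (expIic_intOn hs (s/2 - s*u - s*v) v)
          hint.integrableOn measurableSet_Iic hmono
        rw [expIic_val hs, show s/2 - s*u - s*v + s*v = s/2 - s*u by ring] at this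
        exact this
      rw [← hsplit, hIoi]
      set w1 := Real.exp (s/2 - s*u)
      set w2 := Real.exp (s*u - s/2)
      have hw : w1 * w2 = 1 := by rw [← Real.exp_add, show s/2 - s*u + (s*u - s/2) = 0 by ring,
        Real.exp_zero]
      have hw1 : 0 < w1 := Real.exp_pos _
      have hw2 : 0 < w2 := Real.exp_pos _
      have h2 : 2 ≤ w1 + w2 := by nlinarith [sq_nonneg (w1 - 1)]
      calc (2 * Real.exp (-(s/2)) - Real.exp (-s)) * (2/s) ≤ 1 * (2/s) := by
            apply mul_le_mul_of_nonneg_right hq (by positivity)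
        _ = 2/s := by ring
        _ ≤ w1/s + w2/s := by
            rw [← add_div, div_le_div_iff₀ hs hs]
            nlinarith [hs]
        _ ≤ (∫ y in Set.Iic v, Real.exp (s * |y - 1/2| - s * |y - u| - s * |y - v|)) + w2/s := by
            linarith [hIic]
    · -- straddling 1/2
      have hA := lap_integrable hs (-(s*(1/2 - u))) v
      have hB := lap_integrable hs (-(s*(v - 1/2))) u
      have hC := lap_integrable hs (-(s*(1/2 - u)) - s*(v - 1/2)) (1/2)
      have hpt : ∀ y : ℝ,
          Real.exp (-(s*(1/2 - u)) - s * |y - v|) + Real.exp (-(s*(v - 1/2)) - s * |y - u|)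
            - Real.exp (-(s*(1/2 - u)) - s*(v - 1/2) - s * |y - 1/2|)
          ≤ Real.exp (s * |y - 1/2| - s * |y - u| - s * |y - v|) := by
        intro y
        have hBf : Real.exp (-(s*(v - 1/2)) - s * |y - u|)
            ≤ Real.exp (s * |y - 1/2| - s * |y - u| - s * |y - v|) := by
          apply Real.exp_le_exp.mpr
          have h2 := abs_sub_abs_le_abs_sub (y - v) (y - 1/2)
          rw [show y - v - (y - 1/2) = -(v - 1/2) by ring, abs_neg,
            abs_of_nonneg (by linarith : 0 ≤ v - 1/2)] at h2
          nlinarith [hs.le]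
        have hAf : Real.exp (-(s*(1/2 - u)) - s * |y - v|)
            ≤ Real.exp (s * |y - 1/2| - s * |y - u| - s * |y - v|) := by
          apply Real.exp_le_exp.mpr
          have h2 := abs_sub_abs_le_abs_sub (y - u) (y - 1/2)
          rw [show y - u - (y - 1/2) = 1/2 - u by ring,
            abs_of_nonneg (by linarith : 0 ≤ 1/2 - u)] at h2
          nlinarith [hs.le]
        rcases le_total y (1/2) with hy | hy
        · have hAC : Real.exp (-(s*(1/2 - u)) - s * |y - v|)
              = Real.exp (-(s*(1/2 - u)) - s*(v - 1/2) - s * |y - 1/2|) := by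
            rw [abs_of_nonpos (by linarith : y - v ≤ 0),
              abs_of_nonpos (by linarith : y - 1/2 ≤ 0)]
            ring_nf
          rw [← hAC]; linarith [hBf]
        · have hBC : Real.exp (-(s*(v - 1/2)) - s * |y - u|)
              = Real.exp (-(s*(1/2 - u)) - s*(v - 1/2) - s * |y - 1/2|) := by
            rw [abs_of_nonneg (by linarith : 0 ≤ y - u),
              abs_of_nonneg (by linarith : 0 ≤ y - 1/2)]
            ring_nf
          rw [hBC]; linarith [hAf]
      have hAB : Integrable (fun y : ℝ => Real.exp (-(s*(1/2 - u)) - s * |y - v|)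
          + Real.exp (-(s*(v - 1/2)) - s * |y - u|)) := hA.add hB
      have hABC : Integrable (fun y : ℝ => Real.exp (-(s*(1/2 - u)) - s * |y - v|)
          + Real.exp (-(s*(v - 1/2)) - s * |y - u|)
          - Real.exp (-(s*(1/2 - u)) - s*(v - 1/2) - s * |y - 1/2|)) := hAB.sub hC
      have hmono := integral_mono hABC hint (fun y => hpt y)
      rw [integral_sub hAB hC, integral_add hA hB, lap_val hs, lap_val hs, lap_val hs]
        at hmono
      set t1 := Real.exp (-(s*(1/2 - u)))
      set t2 := Real.exp (-(s*(v - 1/2)))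
      set q := Real.exp (-(s/2))
      have ht12 : Real.exp (-(s*(1/2 - u)) - s*(v - 1/2)) = t1 * t2 := by
        rw [← Real.exp_add]; ring_nf
      rw [ht12] at hmono
      have ht1a : q ≤ t1 := Real.exp_le_exp.mpr (by nlinarith)
      have ht1b : t1 ≤ 1 := Real.exp_le_one_iff.mpr (by nlinarith)
      have ht2a : q ≤ t2 := Real.exp_le_exp.mpr (by nlinarith)
      have ht2b : t2 ≤ 1 := Real.exp_le_one_iff.mpr (by nlinarith)
      have hkey : (1 - t1) * (1 - t2) ≤ (1 - q) * (1 - q) :=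
        mul_le_mul (by linarith) (by linarith) (by linarith) (by linarith)
      have hnum : (2*q - q^2) * 2 ≤ 2*t1 + 2*t2 - 2*(t1*t2) := by nlinarith [hkey]
      calc (2*q - Real.exp (-s)) * (2/s) = ((2*q - q^2) * 2)/s := by rw [hq2]; ring
        _ ≤ (2*t1 + 2*t2 - 2*(t1*t2))/s := by
            rw [div_le_div_iff₀ hs hs]; nlinarith [hnum, hs]
        _ = 2*t1/s + 2*t2/s - 2*(t1*t2)/s := by ring
        _ ≤ _ := hmono

set_option maxHeartbeats 2000000 in
/-- privacy amplification random variable of the Laplace mechanism.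
For the `ε₀`-LDP Laplace mechanism on `[0,1]` with densities
`μ_x(y) = (ε₀/2)e^{−ε₀|y−x|}`, blanket density `ω(y) = (ε₀/2)e^{−ε₀|y−1/2|}`, inputs
`x, x' ∈ [0,1]`, `W ~ ω` and `L = (μ_x(W) − e^ε·μ_{x'}(W))/ω(W)`:
(1) `e^{−ε₀/2}(1 − e^{ε+ε₀}) ≤ L ≤ e^{ε₀/2}(1 − e^{ε−ε₀})` a.s.;
(2) `E[L²] ≤ ((e^{2ε}+1)/3)(2e^{ε₀/2} + e^{−ε₀}) − 2e^ε(2e^{−ε₀/2} − e^{−ε₀})`. -/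
theorem stmt18 (ε₀ ε : ℝ) (hε₀ : 0 < ε₀) (hε : 0 ≤ ε)
    (x x' : ℝ) (hx : x ∈ Set.Icc (0:ℝ) 1) (hx' : x' ∈ Set.Icc (0:ℝ) 1)
    (μ : ℝ → ℝ → ℝ) (hμ : ∀ t y, μ t y = ε₀ / 2 * Real.exp (-(ε₀ * |y - t|)))
    (ω : ℝ → ℝ) (hω : ∀ y, ω y = ε₀ / 2 * Real.exp (-(ε₀ * |y - 1 / 2|)))
    (L : ℝ → ℝ) (hL : ∀ y, L y = (μ x y - Real.exp ε * μ x' y) / ω y) :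
    (∀ᵐ y ∂((volume : Measure ℝ).withDensity fun y => ENNReal.ofReal (ω y)),
      Real.exp (-(ε₀ / 2)) * (1 - Real.exp (ε + ε₀)) ≤ L y ∧
        L y ≤ Real.exp (ε₀ / 2) * (1 - Real.exp (ε - ε₀))) ∧
    ∫ y, (L y) ^ 2 ∂((volume : Measure ℝ).withDensity fun y => ENNReal.ofReal (ω y))
      ≤ (Real.exp (2 * ε) + 1) / 3 * (2 * Real.exp (ε₀ / 2) + Real.exp (-ε₀))
        - 2 * Real.exp ε * (2 * Real.exp (-(ε₀ / 2)) - Real.exp (-ε₀)) := by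
  obtain ⟨hx0, hx1⟩ := hx
  obtain ⟨hx'0, hx'1⟩ := hx'
  have hμeq : μ = fun t y => ε₀ / 2 * Real.exp (-(ε₀ * |y - t|)) := by
    funext t y; exact hμ t y
  have hωeq : ω = fun y => ε₀ / 2 * Real.exp (-(ε₀ * |y - 1 / 2|)) := funext hω
  subst hμeq hωeq
  have hLeq : L = fun y => (ε₀ / 2 * Real.exp (-(ε₀ * |y - x|))
      - Real.exp ε * (ε₀ / 2 * Real.exp (-(ε₀ * |y - x'|))))
      / (ε₀ / 2 * Real.exp (-(ε₀ * |y - 1 / 2|))) := funext hL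
  subst hLeq
  have hεpos : 0 < Real.exp ε := Real.exp_pos _
  -- pointwise bound facts
  have habs : ∀ (t y : ℝ), 0 ≤ t → t ≤ 1 → |(|y - 1/2| - |y - t|)| ≤ 1/2 := by
    intro t y ht0 ht1
    have h1 := abs_abs_sub_abs_le_abs_sub (y - 1/2) (y - t)
    rw [show y - 1/2 - (y - t) = t - 1/2 by ring] at h1
    have h2 : |t - 1/2| ≤ 1/2 := abs_le.mpr ⟨by linarith, by linarith⟩
    linarith
  constructor
  · -- part 1
    apply Filter.Eventually.of_forall
    intro y
    beta_reduce
    have ha1 : (0:ℝ) < Real.exp (ε₀ * |y - x|) := Real.exp_pos _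
    have ha2 : (0:ℝ) < Real.exp (ε₀ * |y - x'|) := Real.exp_pos _
    have hah : (0:ℝ) < Real.exp (ε₀ * |y - 1/2|) := Real.exp_pos _
    have key : (ε₀ / 2 * Real.exp (-(ε₀ * |y - x|))
        - Real.exp ε * (ε₀ / 2 * Real.exp (-(ε₀ * |y - x'|))))
        / (ε₀ / 2 * Real.exp (-(ε₀ * |y - 1 / 2|)))
        = Real.exp (ε₀ * |y - 1/2| - ε₀ * |y - x|)
          - Real.exp ε * Real.exp (ε₀ * |y - 1/2| - ε₀ * |y - x'|) := by
      rw [Real.exp_neg, Real.exp_neg, Real.exp_neg, Real.exp_sub, Real.exp_sub]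
      field_simp
    have hb1 : |(|y - 1/2| - |y - x|)| ≤ 1/2 := habs x y hx0 hx1
    have hb2 : |(|y - 1/2| - |y - x'|)| ≤ 1/2 := habs x' y hx'0 hx'1
    rw [abs_le] at hb1 hb2
    have hu1 : Real.exp (ε₀ * |y - 1/2| - ε₀ * |y - x|) ≤ Real.exp (ε₀/2) :=
      Real.exp_le_exp.mpr (by nlinarith)
    have hl1 : Real.exp (-(ε₀/2)) ≤ Real.exp (ε₀ * |y - 1/2| - ε₀ * |y - x|) :=
      Real.exp_le_exp.mpr (by nlinarith)
    have hu2 : Real.exp (ε₀ * |y - 1/2| - ε₀ * |y - x'|) ≤ Real.exp (ε₀/2) :=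
      Real.exp_le_exp.mpr (by nlinarith)
    have hl2 : Real.exp (-(ε₀/2)) ≤ Real.exp (ε₀ * |y - 1/2| - ε₀ * |y - x'|) :=
      Real.exp_le_exp.mpr (by nlinarith)
    constructor
    · show Real.exp (-(ε₀ / 2)) * (1 - Real.exp (ε + ε₀)) ≤ _
      rw [key]
      have heq : Real.exp (-(ε₀/2)) * (1 - Real.exp (ε + ε₀))
          = Real.exp (-(ε₀/2)) - Real.exp ε * Real.exp (ε₀/2) := by
        rw [mul_sub, mul_one, ← Real.exp_add, ← Real.exp_add,
          show -(ε₀/2) + (ε + ε₀) = ε + ε₀/2 by ring]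
      rw [heq]
      have := mul_le_mul_of_nonneg_left hu2 hεpos.le
      linarith
    · show _ ≤ Real.exp (ε₀ / 2) * (1 - Real.exp (ε - ε₀))
      rw [key]
      have heq : Real.exp (ε₀/2) * (1 - Real.exp (ε - ε₀))
          = Real.exp (ε₀/2) - Real.exp ε * Real.exp (-(ε₀/2)) := by
        rw [mul_sub, mul_one, ← Real.exp_add, ← Real.exp_add,
          show ε₀/2 + (ε - ε₀) = ε + -(ε₀/2) by ring]
      rw [heq]
      have := mul_le_mul_of_nonneg_left hl2 hεpos.le
      linarith
  · -- part 2
    have hωcont : Continuous fun y : ℝ => ε₀ / 2 * Real.exp (-(ε₀ * |y - 1 / 2|)) :=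
      continuous_const.mul (Real.continuous_exp.comp (by continuity))
    have hmeas : Measurable fun y : ℝ => Real.toNNReal (ε₀ / 2 * Real.exp (-(ε₀ * |y - 1 / 2|))) :=
      hωcont.measurable.real_toNNReal
    have hmeq : (fun y : ℝ => ENNReal.ofReal (ε₀ / 2 * Real.exp (-(ε₀ * |y - 1 / 2|))))
        = fun y : ℝ => ((Real.toNNReal (ε₀ / 2 * Real.exp (-(ε₀ * |y - 1 / 2|)))) : ℝ≥0∞) := rfl
    rw [hmeq, integral_withDensity_eq_integral_smul hmeas]
    have hpt2 : ∀ y : ℝ, (Real.toNNReal (ε₀ / 2 * Real.exp (-(ε₀ * |y - 1 / 2|))))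
          • ((ε₀ / 2 * Real.exp (-(ε₀ * |y - x|))
            - Real.exp ε * (ε₀ / 2 * Real.exp (-(ε₀ * |y - x'|))))
            / (ε₀ / 2 * Real.exp (-(ε₀ * |y - 1 / 2|)))) ^ 2
        = ε₀/2 * (Real.exp (ε₀ * |y - 1/2| - ε₀ * |y - x| - ε₀ * |y - x|)
            + Real.exp ε ^ 2 * Real.exp (ε₀ * |y - 1/2| - ε₀ * |y - x'| - ε₀ * |y - x'|)
            - 2 * Real.exp ε * Real.exp (ε₀ * |y - 1/2| - ε₀ * |y - x| - ε₀ * |y - x'|)) := by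
      intro y
      have hωy : (0:ℝ) ≤ ε₀ / 2 * Real.exp (-(ε₀ * |y - 1 / 2|)) := by positivity
      rw [NNReal.smul_def, Real.coe_toNNReal _ hωy, smul_eq_mul]
      have ha1 : Real.exp (ε₀ * |y - x|) ≠ 0 := (Real.exp_pos _).ne'
      have ha2 : Real.exp (ε₀ * |y - x'|) ≠ 0 := (Real.exp_pos _).ne'
      have hah : Real.exp (ε₀ * |y - 1/2|) ≠ 0 := (Real.exp_pos _).ne'
      rw [Real.exp_neg, Real.exp_neg, Real.exp_neg,
        Real.exp_sub, Real.exp_sub, Real.exp_sub, Real.exp_sub, Real.exp_sub, Real.exp_sub]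
      have h12 : |y - 1/2| = |y - 1 / 2| := rfl
      field_simp
      ring
    rw [integral_congr_ae (Filter.Eventually.of_forall hpt2)]
    have hG1 := G_integrable hε₀ hx0 hx1 x
    have hG2 := G_integrable hε₀ hx'0 hx'1 x'
    have hG3 := G_integrable hε₀ hx'0 hx'1 x
    have hI1 := selfI hε₀ hx0 hx1
    have hI2 := selfI hε₀ hx'0 hx'1
    have hJ : (2 * Real.exp (-(ε₀/2)) - Real.exp (-ε₀)) * (2/ε₀)
        ≤ ∫ y : ℝ, Real.exp (ε₀ * |y - 1/2| - ε₀ * |y - x| - ε₀ * |y - x'|) := by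
      rcases le_total x x' with h | h
      · exact crossJ hε₀ hx0 h hx'1
      · have hflip : (fun y : ℝ => Real.exp (ε₀ * |y - 1/2| - ε₀ * |y - x| - ε₀ * |y - x'|))
            = fun y : ℝ => Real.exp (ε₀ * |y - 1/2| - ε₀ * |y - x'| - ε₀ * |y - x|) := by
          funext y; congr 1; ring
        rw [hflip]
        exact crossJ hε₀ hx'0 h hx1
    rw [MeasureTheory.integral_const_mul]
    have hsum : Integrable (fun y : ℝ =>
        Real.exp (ε₀ * |y - 1/2| - ε₀ * |y - x| - ε₀ * |y - x|)
        + Real.exp ε ^ 2 * Real.exp (ε₀ * |y - 1/2| - ε₀ * |y - x'| - ε₀ * |y - x'|)) :=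
      hG1.add (hG2.const_mul _)
    rw [integral_sub hsum ((hG3).const_mul _), integral_add hG1 (hG2.const_mul _),
      MeasureTheory.integral_const_mul, MeasureTheory.integral_const_mul]
    set I1 := ∫ y : ℝ, Real.exp (ε₀ * |y - 1/2| - ε₀ * |y - x| - ε₀ * |y - x|)
    set I2 := ∫ y : ℝ, Real.exp (ε₀ * |y - 1/2| - ε₀ * |y - x'| - ε₀ * |y - x'|)
    set I3 := ∫ y : ℝ, Real.exp (ε₀ * |y - 1/2| - ε₀ * |y - x| - ε₀ * |y - x'|)
    have h2ε : Real.exp (2 * ε) = Real.exp ε ^ 2 := by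
      rw [sq, ← Real.exp_add]; ring_nf
    rw [h2ε]
    set K := (4 * Real.exp (ε₀/2) + 2 * Real.exp (-ε₀)) / (3 * ε₀) with hK
    set Jl := (2 * Real.exp (-(ε₀/2)) - Real.exp (-ε₀)) * (2/ε₀) with hJl
    have step1 : ε₀/2 * (I1 + Real.exp ε ^ 2 * I2 - 2 * Real.exp ε * I3)
        ≤ ε₀/2 * (K + Real.exp ε ^ 2 * K - 2 * Real.exp ε * Jl) := by
      apply mul_le_mul_of_nonneg_left _ (by positivity)
      have m1 := mul_le_mul_of_nonneg_left hI2 (sq_nonneg (Real.exp ε))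
      have m2 := mul_le_mul_of_nonneg_left hJ (by positivity : (0:ℝ) ≤ 2 * Real.exp ε)
      linarith
    refine le_trans step1 (le_of_eq ?_)
    rw [hK, hJl]
    field_simp
    ring
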